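/- arXiv:2403.03928 — 7 statements merged into one kernel-verified Lean document; each statement's English description precedes it below -/
import Mathlib

section
/- Let S be a positive integer and let a, b, c, d be elements of the direct sum ⊕_{i∈ℤ} ℤ/2 (finitely supported functions ℤ → ℤ/2). Suppose suppInt(a−b) ≤ S, suppInt(a−c) ≤ S, suppInt(b−d) ≤ S, suppInt(c−d) ≤ S, while suppInt(a−d) ≥ 2S and suppInt(b−c) ≥ 2S. Then a + d = b + c (equivalently, since every element is 2-torsion, a + b = c + d); i.e. every such quadrilateral is a parallelogram. -/
/-- The length of the smallest interval of integers containing the support of `x`: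
`max(supp x) − min(supp x) + 1` when `x ≠ 0`, and `0` when `x = 0`. -/
noncomputable def suppInt (x : ℤ →₀ ZMod 2) : ℤ :=
  if h : x.support.Nonempty then x.support.max' h - x.support.min' h + 1 else 0

lemma suppInt_le_of_subset_Icc {v : ℤ →₀ ZMod 2} {p S : ℤ}
    (hS : 0 ≤ S) (h : v.support ⊆ Finset.Icc p (p + S - 1)) : suppInt v ≤ S := by
  rw [suppInt]
  split_ifs with hne
  · have h1 := h (v.support.max'_mem hne)
    have h2 := h (v.support.min'_mem hne)
    simp only [Finset.mem_Icc] at h1 h2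
    omega
  · exact hS

lemma key' {S : ℤ} (hS : 0 < S) (p q s : ℤ →₀ ZMod 2) (hpq : p + q = s)
    (hp : suppInt p ≤ S) (hq : suppInt q ≤ S)
    (hne : s.support.Nonempty)
    (hbig : 2 * S ≤ suppInt s)
    (hm : s.support.min' hne ∈ p.support) :
    p.support ⊆ Finset.Icc (s.support.min' hne) (s.support.min' hne + S - 1) ∧
    q.support ⊆ Finset.Icc (s.support.max' hne - S + 1) (s.support.max' hne) := by
  set m := s.support.min' hne with hmdef
  set M := s.support.max' hne with hMdef
  rw [suppInt, dif_pos hne] at hbig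
  have hMm : m + 2 * S - 1 ≤ M := by omega
  have hpne : p.support.Nonempty := ⟨m, hm⟩
  rw [suppInt, dif_pos hpne] at hp
  -- every element of supp p is ≤ m + S - 1
  have pupper : ∀ i ∈ p.support, i ≤ m + S - 1 := by
    intro i hi
    have h1 := p.support.le_max' i hi
    have h2 := p.support.min'_le m hm
    have h3 := p.support.min'_le i hi
    omega
  -- M is not in supp p
  have hMp : M ∉ p.support := by
    intro hMp
    have := pupper M hMp
    omega
  -- hence M ∈ supp q
  have hMs : M ∈ s.support := s.support.max'_mem hne
  have hMq : M ∈ q.support := by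
    have hMs' : M ∈ (p + q).support := by rw [hpq]; exact hMs
    have : M ∈ p.support ∪ q.support := Finsupp.support_add hMs'
    rcases Finset.mem_union.mp this with h | h
    · exact absurd h hMp
    · exact h
  have hqne : q.support.Nonempty := ⟨M, hMq⟩
  rw [suppInt, dif_pos hqne] at hq
  have qlower : ∀ i ∈ q.support, M - S + 1 ≤ i := by
    intro i hi
    have h1 := q.support.min'_le i hi
    have h2 := q.support.le_max' M hMq
    have h3 := q.support.le_max' i hi
    omega
  -- values add
  have sval : ∀ i, p i + q i = s i := by
    intro i
    rw [← hpq]; rfl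
  constructor
  · intro i hi
    rw [Finset.mem_Icc]
    refine ⟨?_, pupper i hi⟩
    by_contra hlt
    push_neg at hlt
    have his : i ∉ s.support := by
      intro his
      exact absurd (s.support.min'_le i his) (by omega)
    have hsi : s i = 0 := Finsupp.notMem_support_iff.mp his
    have hpi : p i ≠ 0 := Finsupp.mem_support_iff.mp hi
    have hqi : q i ≠ 0 := by
      intro h0
      apply hpi
      have := sval i
      rw [h0, hsi, add_zero] at this
      exact this
    have := qlower i (Finsupp.mem_support_iff.mpr hqi)
    omega
  · intro i hi
    rw [Finset.mem_Icc]
    refine ⟨qlower i hi, ?_⟩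
    by_contra hlt
    push_neg at hlt
    have his : i ∉ s.support := by
      intro his
      exact absurd (s.support.le_max' i his) (by omega)
    have hsi : s i = 0 := Finsupp.notMem_support_iff.mp his
    have hqi : q i ≠ 0 := Finsupp.mem_support_iff.mp hi
    have hpi : p i ≠ 0 := by
      intro h0
      apply hqi
      have := sval i
      rw [h0, hsi, zero_add] at this
      exact this
    have := pupper i (Finsupp.mem_support_iff.mpr hpi)
    omega

lemma key {S : ℤ} (hS : 0 < S) (p q s : ℤ →₀ ZMod 2) (hpq : p + q = s)
    (hp : suppInt p ≤ S) (hq : suppInt q ≤ S)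
    (hne : s.support.Nonempty)
    (hbig : 2 * S ≤ suppInt s) :
    (p.support ⊆ Finset.Icc (s.support.min' hne) (s.support.min' hne + S - 1) ∧
     q.support ⊆ Finset.Icc (s.support.max' hne - S + 1) (s.support.max' hne)) ∨
    (q.support ⊆ Finset.Icc (s.support.min' hne) (s.support.min' hne + S - 1) ∧
     p.support ⊆ Finset.Icc (s.support.max' hne - S + 1) (s.support.max' hne)) := by
  have hms : s.support.min' hne ∈ (p + q).support := by
    rw [hpq]; exact s.support.min'_mem hne
  have : s.support.min' hne ∈ p.support ∪ q.support := Finsupp.support_add hms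
  rcases Finset.mem_union.mp this with h | h
  · exact Or.inl (key' hS p q s hpq hp hq hne hbig h)
  · exact Or.inr (key' hS q p s (by rw [add_comm]; exact hpq) hq hp hne hbig h)

/-- Every sufficiently "large" quadrilateral in `⊕_{i∈ℤ} ℤ/2` is a parallelogram. -/
theorem large_quadrilateral_is_parallelogram
    (S : ℤ) (hS : 0 < S) (a b c d : ℤ →₀ ZMod 2)
    (hab : suppInt (a - b) ≤ S) (hac : suppInt (a - c) ≤ S)
    (hbd : suppInt (b - d) ≤ S) (hcd : suppInt (c - d) ≤ S)
    (had : 2 * S ≤ suppInt (a - d)) (hbc : 2 * S ≤ suppInt (b - c)) :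
    a + d = b + c := by
  have hne : (a - d).support.Nonempty := by
    by_contra h
    rw [suppInt, dif_neg h] at had
    omega
  set m := (a - d).support.min' hne with hmdef
  set M := (a - d).support.max' hne with hMdef
  have hMm : m + 2 * S - 1 ≤ M := by
    have := had
    rw [suppInt, dif_pos hne] at this
    omega
  have k1 := key hS (a - b) (b - d) (a - d) (by abel) hab hbd hne had
  have k2 := key hS (a - c) (c - d) (a - d) (by abel) hac hcd hne had
  have disj : ∀ i : ℤ, i ∈ Finset.Icc m (m + S - 1) → i ∈ Finset.Icc (M - S + 1) M → False := by
    intro i h1 h2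
    simp only [Finset.mem_Icc] at h1 h2
    omega
  have contra : ∀ lo hi : ℤ, hi ≤ lo + S - 1 →
      (b - d).support ⊆ Finset.Icc lo hi →
      (c - d).support ⊆ Finset.Icc lo hi → False := by
    intro lo hi hlen h1 h2
    have heq : b - c = (b - d) - (c - d) := by abel
    have hsub : (b - c).support ⊆ Finset.Icc lo (lo + S - 1) := by
      rw [heq]
      intro i hi'
      rcases Finset.mem_union.mp (Finsupp.support_sub hi') with h | h
      · exact Finset.Icc_subset_Icc le_rfl hlen (h1 h)
      · exact Finset.Icc_subset_Icc le_rfl hlen (h2 h)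
    have := suppInt_le_of_subset_Icc (le_of_lt hS) hsub
    omega
  have main : ∀ (I J : Finset ℤ), (∀ i, i ∈ I → i ∈ J → False) →
      (a - b).support ⊆ I → (c - d).support ⊆ I →
      (a - c).support ⊆ J → (b - d).support ⊆ J → a + d = b + c := by
    intro I J hdisj h1 h2 h3 h4
    have heq : (a - b) - (c - d) = (a - c) - (b - d) := by abel
    have hzero : (a - b) - (c - d) = 0 := by
      rw [← Finsupp.support_eq_empty, Finset.eq_empty_iff_forall_notMem]
      intro i hi
      have hiI : i ∈ I := by
        rcases Finset.mem_union.mp (Finsupp.support_sub hi) with h | h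
        · exact h1 h
        · exact h2 h
      have hiJ : i ∈ J := by
        rw [heq] at hi
        rcases Finset.mem_union.mp (Finsupp.support_sub hi) with h | h
        · exact h3 h
        · exact h4 h
      exact hdisj i hiI hiJ
    have h5 : a - b = c - d := sub_eq_zero.mp hzero
    have h6 := sub_eq_sub_iff_add_eq_add.mp h5
    rw [h6, add_comm]
  rcases k1 with ⟨hx, hz⟩ | ⟨hz, hx⟩ <;> rcases k2 with ⟨hy, hw⟩ | ⟨hw, hy⟩
  · exact absurd (contra (M - S + 1) M (by omega) hz hw) id
  · exact main _ _ disj hx hw hy hz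
  · exact main _ _ (fun i h1 h2 => disj i h2 h1) hx hw hy hz
  · exact absurd (contra m (m + S - 1) (by omega) hz hw) id
end

section
/- Let S be a positive integer and let a, b, c be elements of the direct sum ⊕_{i∈ℤ} ℤ/2 (finitely supported functions ℤ → ℤ/2). If suppInt(a−b) ≤ S, suppInt(a−c) ≤ S, and suppInt(b−c) ≥ 2S, then the support of a−b and the support of a−c are disjoint sets of integers. -/
/-- If `a−b` and `a−c` have small support intervals while `b−c` has a large one,
then the supports of `a−b` and `a−c` are disjoint. -/
theorem supports_disjoint
    (S : ℤ) (hS : 0 < S) (a b c : ℤ →₀ ZMod 2)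
    (hab : suppInt (a - b) ≤ S) (hac : suppInt (a - c) ≤ S)
    (hbc : 2 * S ≤ suppInt (b - c)) :
    Disjoint (a - b).support (a - c).support := by
  by_contra hdis
  rw [Finset.not_disjoint_iff] at hdis
  obtain ⟨i, hi1, hi2⟩ := hdis
  have h1 : (a - b).support.Nonempty := ⟨i, hi1⟩
  have h2 : (a - c).support.Nonempty := ⟨i, hi2⟩
  have h3 : (b - c).support.Nonempty := by
    by_contra h
    rw [Finset.not_nonempty_iff_eq_empty] at h
    rw [suppInt, dif_neg (by simp [h])] at hbc
    linarith
  rw [suppInt, dif_pos h1] at hab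
  rw [suppInt, dif_pos h2] at hac
  rw [suppInt, dif_pos h3] at hbc
  have hi1a := Finset.min'_le _ i hi1
  have hi1b := Finset.le_max' _ i hi1
  have hi2a := Finset.min'_le _ i hi2
  have hi2b := Finset.le_max' _ i hi2
  have key : ∀ j ∈ (b - c).support, i - (S - 1) ≤ j ∧ j ≤ i + (S - 1) := by
    intro j hj
    have hj' : j ∈ (a - b).support ∨ j ∈ (a - c).support := by
      simp only [Finsupp.mem_support_iff, Finsupp.sub_apply] at hj ⊢
      by_contra h
      push_neg at h
      obtain ⟨e1, e2⟩ := h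
      apply hj
      have : b j - c j = (a j - c j) - (a j - b j) := by ring
      rw [this, e1, e2, sub_zero]
    rcases hj' with hj' | hj'
    · have hja := Finset.min'_le _ j hj'
      have hjb := Finset.le_max' _ j hj'
      constructor <;> linarith
    · have hja := Finset.min'_le _ j hj'
      have hjb := Finset.le_max' _ j hj'
      constructor <;> linarith
  obtain ⟨hm1, -⟩ := key _ (Finset.min'_mem _ h3)
  obtain ⟨-, hm2⟩ := key _ (Finset.max'_mem _ h3)
  linarith
end

section
/- Let n ≥ 2 be an integer and ε ≥ 1 a real number. Let p₁, p₂, p₃, p₄ ∈ ℚ, let r₁, r₂, r₃, r₄ be integers none of which is divisible by n with |rᵢ| ≤ ε for all i, and let k₁, k₂, k₃, k₄ be integers such that p₂ − p₁ = r₁·n^{k₁}, p₃ − p₂ = r₂·n^{k₂}, p₄ − p₃ = r₃·n^{k₃}, and p₁ − p₄ = r₄·n^{k₄}. Suppose k₁ > k₂, k₃ > k₄, n^{k₁−k₂} > 2ε, and n^{k₃−k₄} > 2ε. Then k₂ = k₄, k₁ = k₃, r₂ = −r₄, r₁ = −r₃, and consequently p₁ + p₃ = p₂ + p₄. -/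
lemma BS_aux_zero (d x : ℤ) (h : d ∣ x) (h2 : |x| < d) : x = 0 :=
  Int.eq_zero_of_dvd_of_natAbs_lt_natAbs h (by
    have h3 : |x| < |d| := lt_of_lt_of_le h2 (le_abs_self d)
    rw [Int.abs_eq_natAbs, Int.abs_eq_natAbs] at h3
    exact_mod_cast h3)

/-- The arithmetic core of Taback's rigidity argument for `BS(1,n)`: an
`(ε',M')`-quadrilateral in `ℤ[1/n]` is automatically a parallelogram. -/
theorem BS_quadrilateral_is_parallelogram
    (n : ℤ) (hn : 2 ≤ n) (ε : ℝ) (hε : 1 ≤ ε)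
    (p₁ p₂ p₃ p₄ : ℚ)
    (r₁ r₂ r₃ r₄ : ℤ)
    (hr₁ : ¬ n ∣ r₁) (hr₂ : ¬ n ∣ r₂) (hr₃ : ¬ n ∣ r₃) (hr₄ : ¬ n ∣ r₄)
    (hb₁ : (|r₁| : ℝ) ≤ ε) (hb₂ : (|r₂| : ℝ) ≤ ε) (hb₃ : (|r₃| : ℝ) ≤ ε)
    (hb₄ : (|r₄| : ℝ) ≤ ε)
    (k₁ k₂ k₃ k₄ : ℤ)
    (he₁ : p₂ - p₁ = (r₁ : ℚ) * (n : ℚ) ^ k₁)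
    (he₂ : p₃ - p₂ = (r₂ : ℚ) * (n : ℚ) ^ k₂)
    (he₃ : p₄ - p₃ = (r₃ : ℚ) * (n : ℚ) ^ k₃)
    (he₄ : p₁ - p₄ = (r₄ : ℚ) * (n : ℚ) ^ k₄)
    (hk₁₂ : k₁ > k₂) (hk₃₄ : k₃ > k₄)
    (hM₁ : (n : ℝ) ^ (k₁ - k₂) > 2 * ε) (hM₂ : (n : ℝ) ^ (k₃ - k₄) > 2 * ε) :
    k₂ = k₄ ∧ k₁ = k₃ ∧ r₂ = -r₄ ∧ r₁ = -r₃ ∧ p₁ + p₃ = p₂ + p₄ := by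
  have hn0 : (n : ℚ) ≠ 0 := by
    have : n ≠ 0 := by omega
    exact_mod_cast this
  have hnR : (1 : ℝ) < (n : ℝ) := by exact_mod_cast (by omega : (1:ℤ) < n)
  set m : ℤ := min k₂ k₄ with hm
  set a₁ : ℕ := (k₁ - m).toNat with ha₁
  set a₂ : ℕ := (k₂ - m).toNat with ha₂
  set a₃ : ℕ := (k₃ - m).toNat with ha₃
  set a₄ : ℕ := (k₄ - m).toNat with ha₄
  have pow_eq : ∀ k : ℤ, m ≤ k → (n : ℚ) ^ k * (n : ℚ) ^ (-m) =
      ((n ^ (k - m).toNat : ℤ) : ℚ) := by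
    intro k hk
    rw [← zpow_add₀ hn0]
    have h1 : k + -m = ((k - m).toNat : ℤ) := by omega
    rw [h1, zpow_natCast]
    push_cast
    ring
  have hm1 : m ≤ k₁ := by omega
  have hm2 : m ≤ k₂ := by omega
  have hm3 : m ≤ k₃ := by omega
  have hm4 : m ≤ k₄ := by omega
  have hsum : (r₁ : ℚ) * (n : ℚ) ^ k₁ + (r₂ : ℚ) * (n : ℚ) ^ k₂ +
      (r₃ : ℚ) * (n : ℚ) ^ k₃ + (r₄ : ℚ) * (n : ℚ) ^ k₄ = 0 := by
    linear_combination -he₁ - he₂ - he₃ - he₄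
  have key : r₁ * n ^ a₁ + r₂ * n ^ a₂ + r₃ * n ^ a₃ + r₄ * n ^ a₄ = 0 := by
    have hQ : ((r₁ * n ^ a₁ + r₂ * n ^ a₂ + r₃ * n ^ a₃ + r₄ * n ^ a₄ : ℤ) : ℚ) = 0 := by
      have e1 : ((n ^ a₁ : ℤ) : ℚ) = (n : ℚ) ^ k₁ * (n : ℚ) ^ (-m) := (pow_eq k₁ hm1).symm
      have e2 : ((n ^ a₂ : ℤ) : ℚ) = (n : ℚ) ^ k₂ * (n : ℚ) ^ (-m) := (pow_eq k₂ hm2).symm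
      have e3 : ((n ^ a₃ : ℤ) : ℚ) = (n : ℚ) ^ k₃ * (n : ℚ) ^ (-m) := (pow_eq k₃ hm3).symm
      have e4 : ((n ^ a₄ : ℤ) : ℚ) = (n : ℚ) ^ k₄ * (n : ℚ) ^ (-m) := (pow_eq k₄ hm4).symm
      push_cast at e1 e2 e3 e4 ⊢
      linear_combination (n : ℚ) ^ (-m) * hsum + (r₁ : ℚ) * e1 + (r₂ : ℚ) * e2 +
        (r₃ : ℚ) * e3 + (r₄ : ℚ) * e4
    exact_mod_cast hQ
  -- step 1 : k₂ = k₄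
  have hk24 : k₂ = k₄ := by
    rcases lt_trichotomy k₂ k₄ with h | h | h
    · exfalso
      have hm2' : m = k₂ := by omega
      have ha2 : a₂ = 0 := by omega
      have hd : n ∣ r₂ := by
        have : r₂ = -(r₁ * n ^ a₁ + r₃ * n ^ a₃ + r₄ * n ^ a₄) := by
          rw [ha2] at key; ring_nf; ring_nf at key; omega
        rw [this, dvd_neg]
        refine dvd_add (dvd_add ?_ ?_) ?_ <;>
          exact Dvd.dvd.mul_left (dvd_pow_self n (by omega)) _
      exact hr₂ hd
    · exact h
    · exfalso
      have hm4' : m = k₄ := by omega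
      have ha4 : a₄ = 0 := by omega
      have hd : n ∣ r₄ := by
        have : r₄ = -(r₁ * n ^ a₁ + r₂ * n ^ a₂ + r₃ * n ^ a₃) := by
          rw [ha4] at key; ring_nf; ring_nf at key; omega
        rw [this, dvd_neg]
        refine dvd_add (dvd_add ?_ ?_) ?_ <;>
          exact Dvd.dvd.mul_left (dvd_pow_self n (by omega)) _
      exact hr₄ hd
  have ha2 : a₂ = 0 := by omega
  have ha4 : a₄ = 0 := by omega
  have key2 : r₁ * n ^ a₁ + r₃ * n ^ a₃ = -(r₂ + r₄) := by
    rw [ha2, ha4] at key; ring_nf; ring_nf at key; omega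
  -- abs bounds
  have habs : ∀ b : ℕ, (n : ℝ) ^ (b : ℤ) > 2 * ε → |r₂ + r₄| < n ^ b := by
    intro b hb
    have h1 : (|r₂ + r₄| : ℝ) < ((n ^ b : ℤ) : ℝ) := by
      have h2 : (|r₂ + r₄| : ℝ) ≤ (|r₂| : ℝ) + (|r₄| : ℝ) := by
        have := abs_add_le (r₂ : ℝ) (r₄ : ℝ)
        push_cast
        push_cast at this
        linarith
      have h3 : ((n ^ b : ℤ) : ℝ) = (n : ℝ) ^ (b : ℤ) := by
        push_cast [zpow_natCast]; ring
      rw [h3]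
      linarith
    exact_mod_cast h1
  have hM₁' : (n : ℝ) ^ (a₁ : ℤ) > 2 * ε := by
    have : (a₁ : ℤ) = k₁ - k₂ := by omega
    rw [this]; exact hM₁
  have hM₂' : (n : ℝ) ^ (a₃ : ℤ) > 2 * ε := by
    have : (a₃ : ℤ) = k₃ - k₄ := by omega
    rw [this]; exact hM₂
  have habs₁ := habs a₁ hM₁'
  have habs₃ := habs a₃ hM₂'
  -- step 2 : k₁ = k₃
  have hk13 : a₁ = a₃ := by
    rcases lt_trichotomy a₁ a₃ with h | h | h
    · exfalso
      have hfac : r₁ * n ^ a₁ + r₃ * n ^ a₃ = n ^ a₁ * (r₁ + r₃ * n ^ (a₃ - a₁)) := by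
        rw [show (n:ℤ) ^ a₃ = n ^ a₁ * n ^ (a₃ - a₁) from by rw [← pow_add]; congr 1; omega]
        ring
      have hdvd : (n : ℤ) ^ a₁ ∣ r₂ + r₄ := by
        have : r₂ + r₄ = n ^ a₁ * (-(r₁ + r₃ * n ^ (a₃ - a₁))) := by
          rw [hfac] at key2; linarith [key2]
        exact ⟨_, this⟩
      have hz : r₂ + r₄ = 0 := BS_aux_zero _ _ hdvd habs₁
      have hz2 : r₁ + r₃ * n ^ (a₃ - a₁) = 0 := by
        have hne : (n : ℤ) ^ a₁ ≠ 0 := pow_ne_zero _ (by omega)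
        have : n ^ a₁ * (r₁ + r₃ * n ^ (a₃ - a₁)) = 0 := by
          rw [← hfac, key2, hz]; ring
        exact (mul_eq_zero.mp this).resolve_left hne
      have : n ∣ r₁ := by
        have : r₁ = -(r₃ * n ^ (a₃ - a₁)) := by omega
        rw [this, dvd_neg]
        exact Dvd.dvd.mul_left (dvd_pow_self n (by omega)) _
      exact hr₁ this
    · exact h
    · exfalso
      have hfac : r₁ * n ^ a₁ + r₃ * n ^ a₃ = n ^ a₃ * (r₃ + r₁ * n ^ (a₁ - a₃)) := by
        rw [show (n:ℤ) ^ a₁ = n ^ a₃ * n ^ (a₁ - a₃) from by rw [← pow_add]; congr 1; omega]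
        ring
      have hdvd : (n : ℤ) ^ a₃ ∣ r₂ + r₄ := by
        have : r₂ + r₄ = n ^ a₃ * (-(r₃ + r₁ * n ^ (a₁ - a₃))) := by
          rw [hfac] at key2; linarith [key2]
        exact ⟨_, this⟩
      have hz : r₂ + r₄ = 0 := BS_aux_zero _ _ hdvd habs₃
      have hz2 : r₃ + r₁ * n ^ (a₁ - a₃) = 0 := by
        have hne : (n : ℤ) ^ a₃ ≠ 0 := pow_ne_zero _ (by omega)
        have : n ^ a₃ * (r₃ + r₁ * n ^ (a₁ - a₃)) = 0 := by
          rw [← hfac, key2, hz]; ring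
        exact (mul_eq_zero.mp this).resolve_left hne
      have : n ∣ r₃ := by
        have : r₃ = -(r₁ * n ^ (a₁ - a₃)) := by omega
        rw [this, dvd_neg]
        exact Dvd.dvd.mul_left (dvd_pow_self n (by omega)) _
      exact hr₃ this
  have hk13' : k₁ = k₃ := by omega
  -- step 3 : r₂ = -r₄, r₁ = -r₃
  have hfac : r₁ * n ^ a₁ + r₃ * n ^ a₃ = n ^ a₁ * (r₁ + r₃) := by
    rw [hk13]; ring
  have hdvd : (n : ℤ) ^ a₁ ∣ r₂ + r₄ := by
    have : r₂ + r₄ = n ^ a₁ * (-(r₁ + r₃)) := by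
      rw [hfac] at key2; linarith [key2]
    exact ⟨_, this⟩
  have hz : r₂ + r₄ = 0 := BS_aux_zero _ _ hdvd habs₁
  have hz2 : r₁ + r₃ = 0 := by
    have hne : (n : ℤ) ^ a₁ ≠ 0 := pow_ne_zero _ (by omega)
    have : n ^ a₁ * (r₁ + r₃) = 0 := by rw [← hfac, key2, hz]; ring
    exact (mul_eq_zero.mp this).resolve_left hne
  refine ⟨hk24, hk13', by omega, by omega, ?_⟩
  have h4 : (r₄ : ℚ) = -(r₂ : ℚ) := by
    have : r₄ = -r₂ := by omega
    exact_mod_cast this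
  rw [hk24] at he₂
  rw [h4] at he₄
  linear_combination he₂ + he₄
end

section
/- Let B and C be (additive) abelian groups, let Σ ⊆ B be a subset that generates B as a group (the subgroup generated by Σ is all of B), and let ψ : B → C be a function. Suppose that for every a ∈ B and all v, w ∈ Σ one has ψ(a) + ψ(a+v+w) = ψ(a+v) + ψ(a+w). Then ψ sends all parallelograms to parallelograms: for all a, b, c, d ∈ B with a + d = b + c, one has ψ(a) + ψ(d) = ψ(b) + ψ(c). -/
private lemma cancel_aux {C : Type*} [AddCommGroup C] {x₁ y₁ x₂ y₂ x₃ y₃ : C}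
    (h1 : x₁ = y₁) (h2 : x₂ = y₂)
    (h3 : x₃ - y₃ = (x₁ - y₁) + (x₂ - y₂)) : x₃ = y₃ := by
  have : x₃ - y₃ = 0 := by
    rw [h3, sub_eq_zero.mpr h1, sub_eq_zero.mpr h2, add_zero]
  exact sub_eq_zero.mp this

private lemma cancel_aux1 {C : Type*} [AddCommGroup C] {x₁ y₁ x₃ y₃ : C}
    (h1 : x₁ = y₁) (h3 : x₃ - y₃ = x₁ - y₁) : x₃ = y₃ := by
  have : x₃ - y₃ = 0 := by rw [h3, sub_eq_zero.mpr h1]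
  exact sub_eq_zero.mp this

/-- If `ψ` preserves all parallelograms based at pairs of elements of a generating
set `Gens`, then `ψ` preserves all parallelograms. -/
theorem parallelogram_preserving_of_generators
    {B C : Type*} [AddCommGroup B] [AddCommGroup C]
    (Gens : Set B) (hgen : AddSubgroup.closure Gens = ⊤)
    (ψ : B → C)
    (hψ : ∀ a : B, ∀ v ∈ Gens, ∀ w ∈ Gens,
      ψ a + ψ (a + v + w) = ψ (a + v) + ψ (a + w)) :
    ∀ a b c d : B, a + d = b + c → ψ a + ψ d = ψ b + ψ c := by
  have mem_all : ∀ x : B, x ∈ AddSubgroup.closure Gens := by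
    intro x; rw [hgen]; trivial
  have step : ∀ (P : B → Prop),
      (∀ v ∈ Gens, P v) → P 0 →
      (∀ v₁ v₂, P v₁ → P v₂ → P (v₁ + v₂)) →
      (∀ v, P v → P (-v)) → ∀ v : B, P v := by
    intro P hmem h0 hadd hneg v
    induction mem_all v using AddSubgroup.closure_induction with
    | mem x hx => exact hmem x hx
    | zero => exact h0
    | add x y _ _ hx hy => exact hadd x y hx hy
    | neg x _ hx => exact hneg x hx
  have step1 : ∀ v : B, ∀ a : B, ∀ w ∈ Gens,
      ψ a + ψ (a + v + w) = ψ (a + v) + ψ (a + w) := by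
    refine step _ (fun v hv a w hw => hψ a v hv w hw) ?_ ?_ ?_
    · intro a w hw; simp [add_comm]
    · intro v₁ v₂ h1 h2 a w hw
      have e1 := h1 a w hw
      have e2 := h2 (a + v₁) w hw
      rw [show a + v₁ + v₂ + w = a + (v₁ + v₂) + w from by abel,
        show a + v₁ + v₂ = a + (v₁ + v₂) from by abel] at e2
      exact cancel_aux e1 e2 (by abel)
    · intro v h a w hw
      have e := h (a - v) w hw
      rw [show a - v + v + w = a + w from by abel,
        show a - v + v = a from by abel,
        show a - v = a + -v from by abel,
        show a + -v + w = a + -v + w from rfl] at e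
      exact e.symm
  have key : ∀ w : B, ∀ a v : B,
      ψ a + ψ (a + v + w) = ψ (a + v) + ψ (a + w) := by
    refine step _ (fun w hw a v => step1 v a w hw) ?_ ?_ ?_
    · intro a v; simp [add_comm]
    · intro w₁ w₂ h1 h2 a v
      have e1 := h1 a v
      have e2 := h2 (a + w₁) v
      rw [show a + w₁ + v + w₂ = a + v + (w₁ + w₂) from by abel,
        show a + w₁ + v = a + v + w₁ from by abel,
        show a + w₁ + w₂ = a + (w₁ + w₂) from by abel] at e2
      exact cancel_aux e1 e2 (by abel)
    · intro w h a v
      have e := h (a - w) v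
      rw [show a - w + v + w = a + v from by abel,
        show a - w + v = a + v + -w from by abel,
        show a - w + w = a from by abel,
        show a - w = a + -w from by abel] at e
      exact cancel_aux1 e.symm (by abel)
  intro a b c d h
  have hd : d = a + (b - a) + (c - a) := by
    rw [show a + (b - a) + (c - a) = b + c - a from by abel, ← h]; abel
  have e := key (c - a) a (b - a)
  rw [show a + (b - a) + (c - a) = d from hd.symm,
    show a + (b - a) = b from by abel, show a + (c - a) = c from by abel] at e
  exact e
end

section
/- Let S be a positive integer and let Σ be a subset of ⊕_{i∈ℤ} ℤ/2 that generates it as a group. Suppose every v ∈ Σ has its support contained in some interval of S consecutive integers (i.e. for each v ∈ Σ there is i ∈ ℤ with supp(v) ⊆ {i, i+1, …, i+S−1}). Then there exist distinct elements v, z ∈ Σ with v + z ≠ 0 such that the support of v + z is contained in an interval of 2S consecutive integers. -/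
/-- No generating set of `⊕_{i∈ℤ} ℤ/2` all of whose elements have support in an
interval of length `S` can have all pairwise sums supported on large intervals:
some pair of distinct generators has nonzero sum supported in an interval of
`2S` consecutive integers. -/
theorem no_large_generating_set
    (S : ℤ) (hS : 0 < S)
    (Gens : Set (ℤ →₀ ZMod 2)) (hgen : AddSubgroup.closure Gens = ⊤)
    (hsupp : ∀ v ∈ Gens, ∃ i : ℤ,
      (v.support : Set ℤ) ⊆ Set.Icc i (i + S - 1)) :
    ∃ v ∈ Gens, ∃ z ∈ Gens, v ≠ z ∧ v + z ≠ 0 ∧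
      ∃ i : ℤ, ((v + z).support : Set ℤ) ⊆ Set.Icc i (i + 2 * S - 1) := by
  classical
  set U : Set ℤ := ⋃ v ∈ Gens, (v.support : Set ℤ) with hU
  have hsub : ∀ x ∈ AddSubgroup.closure Gens, (x.support : Set ℤ) ⊆ U := by
    intro x hx
    induction hx using AddSubgroup.closure_induction with
    | mem v hv =>
        intro a ha
        exact Set.mem_biUnion hv ha
    | zero =>
        simp
    | add x y hx hy ihx ihy =>
        intro a ha
        have := Finsupp.support_add (g₁ := x) (g₂ := y) (Finset.mem_coe.mp ha)
        rcases Finset.mem_union.mp this with h | h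
        · exact ihx (Finset.mem_coe.mpr h)
        · exact ihy (Finset.mem_coe.mpr h)
    | neg x hx ihx =>
        intro a ha
        apply ihx
        simpa using ha
  have key : ∀ j : ℤ, ∃ v ∈ Gens, j ∈ v.support := by
    intro j
    have h1 : (Finsupp.single j (1 : ZMod 2)) ∈ AddSubgroup.closure Gens := by
      rw [hgen]; trivial
    have h2 := hsub _ h1
    have hj : j ∈ ((Finsupp.single j (1 : ZMod 2)).support : Set ℤ) := by
      rw [Finsupp.support_single_ne_zero j one_ne_zero]; simp
    have := h2 hj
    rw [hU] at this
    simpa using this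
  obtain ⟨v, hv, hv0⟩ := key 0
  have hne : v.support.Nonempty := ⟨0, hv0⟩
  set M : ℤ := v.support.max' hne with hM
  obtain ⟨z, hz, hzj⟩ := key (M + 1)
  have hvz : v ≠ z := by
    intro h
    have : M + 1 ∈ v.support := h ▸ hzj
    have := Finset.le_max' _ _ this
    omega
  have hsum : v + z ≠ 0 := by
    intro h
    apply hvz
    ext a
    have ha : v a + z a = 0 := by
      have := DFunLike.congr_fun h a
      simpa using this
    have : ∀ p q : ZMod 2, p + q = 0 → p = q := by decide
    exact this _ _ ha
  obtain ⟨i, hi⟩ := hsupp v hv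
  obtain ⟨i', hi'⟩ := hsupp z hz
  have hMmem : M ∈ Set.Icc i (i + S - 1) := hi (Finset.mem_coe.mpr (v.support.max'_mem hne))
  have hM1mem : (M + 1) ∈ Set.Icc i' (i' + S - 1) := hi' (Finset.mem_coe.mpr hzj)
  rw [Set.mem_Icc] at hMmem hM1mem
  refine ⟨v, hv, z, hz, hvz, hsum, min i i', ?_⟩
  have h1 : min i i' ≤ i := min_le_left _ _
  have h2 : min i i' ≤ i' := min_le_right _ _
  have h3 : i - S ≤ min i i' := le_min (by linarith) (by linarith)
  have h4 : i' - S ≤ min i i' := le_min (by linarith) (by linarith)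
  intro a ha
  have := Finsupp.support_add (g₁ := v) (g₂ := z) (Finset.mem_coe.mp ha)
  rw [Set.mem_Icc]
  rcases Finset.mem_union.mp this with h | h
  · have := hi (Finset.mem_coe.mpr h)
    rw [Set.mem_Icc] at this
    constructor <;> linarith
  · have := hi' (Finset.mem_coe.mpr h)
    rw [Set.mem_Icc] at this
    constructor <;> linarith
end

section
/- Let π be the bijection of the set of functions {0,1,2} → ℤ/2 that swaps the function (1,0,0) (value 1 at index 0, value 0 at indices 1 and 2) with the function (1,1,1), and fixes all other functions. Let ψ be the induced map on finitely supported functions ℤ → ℤ/2, defined by (ψx)(i) = (π(x restricted to {0,1,2}))(i) for 0 ≤ i ≤ 2 and (ψx)(i) = x(i) otherwise. Then ψ is not parallelogram preserving: there exist a, b, c, d ∈ ⊕_{i∈ℤ} ℤ/2 with a + d = b + c but ψ(a) + ψ(d) ≠ ψ(b) + ψ(c). (Explicitly, one may take a = δ_0, d = δ_2, b = δ_0 + δ_2, c = 0.) -/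
/-- The map on `⊕_{i∈ℤ} ℤ/2` induced by a permutation `π` of the functions
`{0,…,m−1} → ℤ/2`: it applies `π` to the coordinates with indices in
`{0,…,m−1}` and leaves all other coordinates unchanged. -/
noncomputable def inducedMap (m : ℕ) (π : (Fin m → ZMod 2) → (Fin m → ZMod 2))
    (x : ℤ →₀ ZMod 2) : ℤ →₀ ZMod 2 :=
  x + ∑ j : Fin m,
    Finsupp.single ((j : ℕ) : ℤ) (π (fun k => x ((k : ℕ) : ℤ)) j - x ((j : ℕ) : ℤ))

/-- The permutation of `{0,1,2} → ℤ/2` swapping `(1,0,0)` and `(1,1,1)` and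
fixing everything else. -/
def swapPerm : (Fin 3 → ZMod 2) → (Fin 3 → ZMod 2) :=
  fun f => if f = ![1, 0, 0] then ![1, 1, 1]
    else if f = ![1, 1, 1] then ![1, 0, 0] else f

/-- The map induced by `swapPerm` is not parallelogram preserving. -/
theorem inducedMap_swapPerm_not_parallelogram_preserving :
    ∃ a b c d : ℤ →₀ ZMod 2, a + d = b + c ∧
      inducedMap 3 swapPerm a + inducedMap 3 swapPerm d
        ≠ inducedMap 3 swapPerm b + inducedMap 3 swapPerm c := by
  refine ⟨Finsupp.single 0 1, Finsupp.single 0 1 + Finsupp.single 2 1, 0,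
    Finsupp.single 2 1, by abel, fun h => ?_⟩
  have h1 := congrArg (fun f => f 1)
    (congrArg (fun g : ℤ →₀ ZMod 2 => (g : ℤ → ZMod 2)) h)
  simp only [inducedMap, swapPerm, Fin.sum_univ_three, Finsupp.coe_add,
    Pi.add_apply, Finsupp.single_apply, Finsupp.add_apply, Finsupp.coe_zero,
    Pi.zero_apply] at h1
  norm_num at h1
  revert h1
  decide
end

section
/- Let k be a natural number and let ψ : ⊕_{i∈ℤ} ℤ/2 → ⊕_{i∈ℤ} ℤ/2 be a function such that for all p, q one has suppInt(ψ(p) − ψ(q)) ≤ suppInt(p − q) + k and suppInt(p − q) ≤ suppInt(ψ(p) − ψ(q)) + k. Then for every positive integer s and all a, b, c, d ∈ ⊕_{i∈ℤ} ℤ/2 with suppInt(a−b) ≤ s, suppInt(a−c) ≤ s, suppInt(b−d) ≤ s, suppInt(c−d) ≤ s, suppInt(a−d) ≥ 2s + 3k, and suppInt(b−c) ≥ 2s + 3k, one has ψ(a) + ψ(d) = ψ(b) + ψ(c). -/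
private lemma suppInt_le_aux (x : ℤ →₀ ZMod 2) (lo hi : ℤ) (hlo : lo ≤ hi)
    (h : ∀ i ∈ x.support, lo ≤ i ∧ i ≤ hi) : suppInt x ≤ hi - lo + 1 := by
  unfold suppInt
  split_ifs with hne
  · have h1 := (h _ (x.support.max'_mem hne)).2
    have h2 := (h _ (x.support.min'_mem hne)).1
    linarith
  · linarith

private lemma supp_subset_aux (x : ℤ →₀ ZMod 2) (j : ℤ) (hj : j ∈ x.support)
    (L : ℤ) (hx : suppInt x ≤ L) :
    ∀ i ∈ x.support, j - (L - 1) ≤ i ∧ i ≤ j + (L - 1) := by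
  intro i hi
  have hne : x.support.Nonempty := ⟨j, hj⟩
  unfold suppInt at hx
  rw [dif_pos hne] at hx
  have h1 := x.support.min'_le j hj
  have h2 := x.support.le_max' j hj
  have h3 := x.support.min'_le i hi
  have h4 := x.support.le_max' i hi
  constructor <;> linarith

private lemma nonempty_of_suppInt (x : ℤ →₀ ZMod 2) (h : 1 ≤ suppInt x) :
    x.support.Nonempty := by
  by_contra hc
  unfold suppInt at h
  rw [dif_neg hc] at h
  linarith

private lemma excl_aux (x y : ℤ →₀ ZMod 2) (j : ℤ) (hj : j ∈ (x + y).support) :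
    (j ∈ x.support ∧ j ∉ y.support) ∨ (j ∉ x.support ∧ j ∈ y.support) := by
  simp only [Finsupp.mem_support_iff, Finsupp.add_apply] at *
  have hcase : ∀ a : ZMod 2, a = 0 ∨ a = 1 := by decide
  rcases hcase (x j) with h | h <;> rcases hcase (y j) with h' | h' <;>
    rw [h, h'] at hj <;> simp [h, h'] at hj ⊢
  exact hj (by decide)

private lemma split_aux (L : ℤ) (hL : 1 ≤ L) (u w X : ℤ →₀ ZMod 2) (hX : u + w = X)
    (hu : suppInt u ≤ L) (hw : suppInt w ≤ L)
    (hne : X.support.Nonempty) (h2 : 2 * L ≤ suppInt X) :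
    (X.support.min' hne ∈ u.support ∧ X.support.max' hne ∈ w.support) ∨
    (X.support.min' hne ∈ w.support ∧ X.support.max' hne ∈ u.support) := by
  subst hX
  set m := (u + w).support.min' hne with hm
  set M := (u + w).support.max' hne with hM
  have hmmem : m ∈ (u + w).support := Finset.min'_mem _ hne
  have hMmem : M ∈ (u + w).support := Finset.max'_mem _ hne
  have hkey : M - m + 1 = suppInt (u + w) := by
    unfold suppInt; rw [dif_pos hne]
  rcases excl_aux u w m hmmem with ⟨h1, _⟩ | ⟨_, h1⟩ <;>
    rcases excl_aux u w M hMmem with ⟨h2', _⟩ | ⟨_, h2'⟩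
  · exact absurd ((supp_subset_aux u m h1 L hu M h2').2) (by linarith)
  · exact Or.inl ⟨h1, h2'⟩
  · exact Or.inr ⟨h1, h2'⟩
  · exact absurd ((supp_subset_aux w m h1 L hw M h2').2) (by linarith)

/-- A map of `⊕_{i∈ℤ} ℤ/2` distorting `suppInt` by an additive constant `k`
sends sufficiently large `(ε,M)`-parallelograms to parallelograms. -/
theorem coarse_suppInt_preserving_sends_large_parallelograms
    (k : ℕ) (ψ : (ℤ →₀ ZMod 2) → (ℤ →₀ ZMod 2))
    (hup : ∀ p q : ℤ →₀ ZMod 2, suppInt (ψ p - ψ q) ≤ suppInt (p - q) + k)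
    (hdown : ∀ p q : ℤ →₀ ZMod 2, suppInt (p - q) ≤ suppInt (ψ p - ψ q) + k) :
    ∀ s : ℤ, 0 < s → ∀ a b c d : ℤ →₀ ZMod 2,
      suppInt (a - b) ≤ s → suppInt (a - c) ≤ s →
      suppInt (b - d) ≤ s → suppInt (c - d) ≤ s →
      2 * s + 3 * k ≤ suppInt (a - d) → 2 * s + 3 * k ≤ suppInt (b - c) →
      ψ a + ψ d = ψ b + ψ c := by
  intro s hs a b c d hab hac hbd hcd had hbc
  have hk0 : (0 : ℤ) ≤ (k : ℤ) := Int.natCast_nonneg k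
  set L : ℤ := s + k with hLdef
  have hL : 1 ≤ L := by omega
  set u := ψ a - ψ b with hudef
  set v := ψ a - ψ c with hvdef
  set w := ψ b - ψ d with hwdef
  set z := ψ c - ψ d with hzdef
  set X := ψ a - ψ d with hXdef
  set Y := ψ b - ψ c with hYdef
  have hu : suppInt u ≤ L := le_trans (hup a b) (by omega)
  have hv : suppInt v ≤ L := le_trans (hup a c) (by omega)
  have hw : suppInt w ≤ L := le_trans (hup b d) (by omega)
  have hz : suppInt z ≤ L := le_trans (hup c d) (by omega)
  have hX : 2 * L ≤ suppInt X := by have := hdown a d; rw [← hXdef] at this; omega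
  have hY : 2 * L ≤ suppInt Y := by have := hdown b c; rw [← hYdef] at this; omega
  have huw : u + w = X := sub_add_sub_cancel _ _ _
  have hvz : v + z = X := sub_add_sub_cancel _ _ _
  have key2 : ∀ p q r : ZMod 2, (p - q) + (p - r) = q - r := by decide
  have key3 : ∀ p q r : ZMod 2, (p - q) + (r - q) = p - r := by decide
  have key4 : ∀ p q r t : ZMod 2, (p - q) + (r - t) = (p - r) + (q - t) := by decide
  have key5 : ∀ p q r t : ZMod 2, (p - q) + (r - t) = 0 → p + t = q + r := by decide
  have huv : u + v = Y := by
    ext i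
    simpa [hudef, hvdef, hYdef, Finsupp.sub_apply] using key2 (ψ a i) (ψ b i) (ψ c i)
  have hwz : w + z = Y := by
    ext i
    simpa [hwdef, hzdef, hYdef, Finsupp.sub_apply] using key3 (ψ b i) (ψ d i) (ψ c i)
  have htvw : u + z = v + w := by
    ext i
    simpa [hudef, hvdef, hwdef, hzdef, Finsupp.sub_apply] using
      key4 (ψ a i) (ψ b i) (ψ c i) (ψ d i)
  have hXne : X.support.Nonempty := nonempty_of_suppInt X (by omega)
  set m := X.support.min' hXne with hm
  set M := X.support.max' hXne with hM
  have hkey : M - m + 1 = suppInt X := by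
    rw [hm, hM]; unfold suppInt; rw [dif_pos hXne]
  have hgoal : u + z = 0 → ψ a + ψ d = ψ b + ψ c := by
    intro h0
    ext i
    have := congrArg (fun f : ℤ →₀ ZMod 2 => f i) h0
    simp only [hudef, hzdef, Finsupp.add_apply, Finsupp.sub_apply,
      Finsupp.coe_zero, Pi.zero_apply] at this
    simpa [Finsupp.add_apply] using key5 (ψ a i) (ψ b i) (ψ c i) (ψ d i) this
  -- contradiction helper: two small pieces both containing a common support point
  -- cannot sum to Y
  have hYcontra : ∀ p q : ℤ →₀ ZMod 2, p + q = Y → suppInt p ≤ L → suppInt q ≤ L →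
      ∀ j : ℤ, j ∈ p.support → j ∈ q.support → False := by
    intro p q hpq hp hq j hjp hjq
    have hbound : suppInt Y ≤ (j + (L - 1)) - (j - (L - 1)) + 1 := by
      apply suppInt_le_aux _ _ _ (by omega)
      intro i hi
      rw [← hpq] at hi
      rcases excl_aux p q i hi with ⟨h1, _⟩ | ⟨_, h1⟩
      · exact supp_subset_aux p j hjp L hp i h1
      · exact supp_subset_aux q j hjq L hq i h1
    omega
  rcases split_aux L hL u w X huw hu hw hXne hX with ⟨hmu, hMw⟩ | ⟨hmw, hMu⟩ <;>
    rcases split_aux L hL v z X hvz hv hz hXne hX with ⟨hmv, hMz⟩ | ⟨hmz, hMv⟩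
  · exact absurd (hYcontra u v huv hu hv m hmu hmv) (by simp)
  · -- m ∈ u, m ∈ z ; M ∈ w, M ∈ v : supp (u+z) ⊆ left, supp (v+w) ⊆ right
    apply hgoal
    rw [← Finsupp.support_eq_empty]
    rw [Finset.eq_empty_iff_forall_notMem]
    intro i hi
    have hleft : i ≤ m + (L - 1) := by
      rcases excl_aux u z i hi with ⟨h1, _⟩ | ⟨_, h1⟩
      · exact (supp_subset_aux u m hmu L hu i h1).2
      · exact (supp_subset_aux z m hmz L hz i h1).2
    have hi2 : i ∈ (v + w).support := by rw [← htvw]; exact hi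
    have hright : M - (L - 1) ≤ i := by
      rcases excl_aux v w i hi2 with ⟨h1, _⟩ | ⟨_, h1⟩
      · exact (supp_subset_aux v M hMv L hv i h1).1
      · exact (supp_subset_aux w M hMw L hw i h1).1
    omega
  · -- m ∈ w, m ∈ v ; M ∈ u, M ∈ z : supp (v+w) ⊆ left, supp (u+z) ⊆ right
    apply hgoal
    rw [← Finsupp.support_eq_empty]
    rw [Finset.eq_empty_iff_forall_notMem]
    intro i hi
    have hright : M - (L - 1) ≤ i := by
      rcases excl_aux u z i hi with ⟨h1, _⟩ | ⟨_, h1⟩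
      · exact (supp_subset_aux u M hMu L hu i h1).1
      · exact (supp_subset_aux z M hMz L hz i h1).1
    have hi2 : i ∈ (v + w).support := by rw [← htvw]; exact hi
    have hleft : i ≤ m + (L - 1) := by
      rcases excl_aux v w i hi2 with ⟨h1, _⟩ | ⟨_, h1⟩
      · exact (supp_subset_aux v m hmv L hv i h1).2
      · exact (supp_subset_aux w m hmw L hw i h1).2
    omega
  · exact absurd (hYcontra w z hwz hw hz m hmw hmz) (by simp)
end
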